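/- arXiv:1308.5854 — 2 statements merged into one kernel-verified Lean document; each statement's English description precedes it below -/
import Mathlib

section
/- Let X = {X_s, s ≥ 0} be a real-valued stochastic process with independent increments and jointly measurable paths, let θ ∈ ℝ, and suppose hypothesis (H^θ2) holds with constant c(θ). Define x_ε^θ(t) = ε c(θ) ∫_0^{2t/ε²} e^{iθ X_s} ds for t ∈ [0,T]. Then for all 0 ≤ s < t ≤ T, lim_{ε→0} E[‖x_ε^θ(t) − x_ε^θ(s)‖²] = 2(t−s), where ‖·‖ denotes the modulus of a complex number. -/
open MeasureTheory ProbabilityTheory Complex Filter Topology Set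

noncomputable section

/-- The characteristic function of the increment `X_y - X_x` evaluated at `θ`:
`φ_{X_y - X_x}(θ) = E[exp(i θ (X_y - X_x))]`. -/
def charIncr {Ω : Type*} [MeasurableSpace Ω] (P : Measure Ω) (X : ℝ → Ω → ℝ)
    (x y θ : ℝ) : ℂ :=
  ∫ ω, Complex.exp (Complex.I * θ * (X y ω - X x ω)) ∂P

/-- A real-valued process has independent increments. -/
def HasIndepIncrements {Ω : Type*} [MeasurableSpace Ω] (P : Measure Ω)
    (X : ℝ → Ω → ℝ) : Prop :=
  ∀ (n : ℕ) (τ : Fin (n + 1) → ℝ), Monotone τ → (∀ i, 0 ≤ τ i) →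
    iIndepFun
      (fun i : Fin n => fun ω => X (τ i.succ) ω - X (τ i.castSucc) ω) P

/-- Hypothesis (H^θ1). -/
def HypOne {Ω : Type*} [MeasurableSpace Ω] (P : Measure Ω) (X : ℝ → Ω → ℝ)
    (θ T : ℝ) : Prop :=
  ∃ K : ℝ, ∀ ε : ℝ, 0 < ε → ∀ s t : ℝ, 0 ≤ s → s < t → t ≤ T →
    ε ^ 2 * ∫ y in (2 * s / ε ^ 2)..(2 * t / ε ^ 2),
        ∫ x in (2 * s / ε ^ 2)..y, ‖charIncr P X x y θ‖
      ≤ K * (t - s)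

/-- Hypothesis (H^θ2), with constant `c`. -/
def HypTwo {Ω : Type*} [MeasurableSpace Ω] (P : Measure Ω) (X : ℝ → Ω → ℝ)
    (θ T c : ℝ) : Prop :=
  ∀ s t : ℝ, 0 ≤ s → s < t → t ≤ T →
    Tendsto (fun ε : ℝ =>
        (↑(ε ^ 2 * c ^ 2) : ℂ) * ∫ x in (2 * s / ε ^ 2)..(2 * t / ε ^ 2),
          ∫ y in (2 * s / ε ^ 2)..x,
            (charIncr P X y x θ + charIncr P X y x (-θ)))
      (𝓝[>] 0) (𝓝 ((2 * (t - s) : ℝ) : ℂ))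

/-- Hypothesis (H^θ3). -/
def HypThree {Ω : Type*} [MeasurableSpace Ω] (P : Measure Ω) (X : ℝ → Ω → ℝ)
    (θ T : ℝ) : Prop :=
  ∀ s t : ℝ, 0 ≤ s → s < t → t ≤ T →
    Tendsto (fun ε : ℝ =>
        ε ^ 2 * ∫ y in (2 * s / ε ^ 2)..(2 * t / ε ^ 2),
          ∫ x in (2 * s / ε ^ 2)..y,
            ‖charIncr P X x y θ‖ * ‖charIncr P X (2 * s / ε ^ 2) x (2 * θ)‖)
      (𝓝[>] 0) (𝓝 0)

/-- A standard real Brownian motion on `[0, T]`. -/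
def IsStdBMOn {Ω : Type*} [MeasurableSpace Ω] (P : Measure Ω)
    (B : ℝ → Ω → ℝ) (T : ℝ) : Prop :=
  (∀ t ∈ Set.Icc (0 : ℝ) T, Measurable (B t)) ∧
  (∀ᵐ ω ∂P, B 0 ω = 0) ∧
  (∀ᵐ ω ∂P, ContinuousOn (fun t => B t ω) (Set.Icc 0 T)) ∧
  (∀ s t : ℝ, 0 ≤ s → s ≤ t → t ≤ T →
    P.map (fun ω => B t ω - B s ω) = gaussianReal 0 (Real.toNNReal (t - s))) ∧
  (∀ (n : ℕ) (τ : Fin (n + 1) → ℝ), Monotone τ → (∀ i, τ i ∈ Set.Icc (0 : ℝ) T) →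
    iIndepFun
      (fun i : Fin n => fun ω => B (τ i.succ) ω - B (τ i.castSucc) ω) P)

/-- A complex Brownian motion on `[0, T]`: its real and imaginary parts are two
independent standard real Brownian motions. -/
def IsComplexBMOn {Ω : Type*} [MeasurableSpace Ω] (P : Measure Ω)
    (Z : ℝ → Ω → ℂ) (T : ℝ) : Prop :=
  IsStdBMOn P (fun t ω => (Z t ω).re) T ∧
  IsStdBMOn P (fun t ω => (Z t ω).im) T ∧
  IndepFun (fun ω => fun t : ℝ => (Z t ω).re) (fun ω => fun t : ℝ => (Z t ω).im) P

/-- The (Kac–Stroock type) approximation process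
`x_ε^θ(t) = ε c(θ) ∫_0^{2t/ε²} e^{iθ X_s} ds`. -/
def approxProc {Ω : Type*} [MeasurableSpace Ω] (X : ℝ → Ω → ℝ)
    (θ c ε t : ℝ) (ω : Ω) : ℂ :=
  (↑(ε * c) : ℂ) * ∫ s in (0 : ℝ)..(2 * t / ε ^ 2),
    Complex.exp (Complex.I * θ * X s ω)

instance (T : ℝ) : MeasurableSpace C(Set.Icc (0 : ℝ) T, ℂ) := borel _


namespace SecondMomentAux

lemma fin_restrict {s : Set ℝ} (h : MeasureTheory.volume s < ⊤) :
    IsFiniteMeasure (volume.restrict s) :=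
  ⟨by rwa [Measure.restrict_apply_univ]⟩

lemma norm_exp_I_mul (θ x : ℝ) : ‖Complex.exp (Complex.I * θ * x)‖ = 1 := by
  rw [show (Complex.I * (θ : ℂ) * (x : ℂ)) = ((θ * x : ℝ) : ℂ) * Complex.I by
    push_cast; ring]
  rw [Complex.norm_exp_ofReal_mul_I]

lemma norm_exp_I_mul_sub (θ x y : ℝ) :
    ‖Complex.exp (Complex.I * θ * ((x : ℂ) - (y : ℂ)))‖ = 1 := by
  rw [show (Complex.I * (θ : ℂ) * ((x : ℂ) - (y : ℂ)))
      = ((θ * (x - y) : ℝ) : ℂ) * Complex.I by push_cast; ring]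
  rw [Complex.norm_exp_ofReal_mul_I]

lemma exp_mul_conj (θ x y : ℝ) :
    Complex.exp (Complex.I * θ * x) * (starRingEnd ℂ) (Complex.exp (Complex.I * θ * y))
      = Complex.exp (Complex.I * θ * ((x : ℂ) - (y : ℂ))) := by
  rw [← Complex.exp_conj, ← Complex.exp_add]
  congr 1
  simp only [map_mul, Complex.conj_I, Complex.conj_ofReal]
  ring

lemma integrable_norm_le_one {α : Type*} [MeasurableSpace α] {μ : Measure α}
    [IsFiniteMeasure μ] {f : α → ℂ} (hf : AEStronglyMeasurable f μ)
    (hb : ∀ x, ‖f x‖ ≤ 1) : Integrable f μ :=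
  (integrable_const (1 : ℝ)).mono' hf (Filter.Eventually.of_forall hb)

lemma square_split (f : ℝ × ℝ → ℂ) (hf : StronglyMeasurable f) (hb : ∀ p, ‖f p‖ ≤ 1)
    (a b : ℝ) :
    (∫ x in Set.Ioc a b, ∫ y in Set.Ioc a b, f (x, y)) =
      ∫ x in Set.Ioc a b, ∫ y in Set.Ioc a x, (f (x, y) + f (y, x)) := by
  set μ : Measure ℝ := volume.restrict (Set.Ioc a b) with hμ
  haveI : IsFiniteMeasure μ := fin_restrict measure_Ioc_lt_top
  set D : Set (ℝ × ℝ) := {p : ℝ × ℝ | p.2 ≤ p.1} with hDdef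
  have hD : MeasurableSet D := measurableSet_le measurable_snd measurable_fst
  have hfi : Integrable f (μ.prod μ) := integrable_norm_le_one hf.aestronglyMeasurable hb
  -- split of the product integral
  have hsplit : ∫ p, f p ∂(μ.prod μ) =
      (∫ p, D.indicator f p ∂(μ.prod μ)) + ∫ p, Dᶜ.indicator f p ∂(μ.prod μ) := by
    rw [← integral_add (hfi.indicator hD) (hfi.indicator hD.compl)]
    exact integral_congr_ae (Filter.Eventually.of_forall fun p =>
      (Set.indicator_self_add_compl_apply D f p).symm)
  -- first piece
  have h1 : (∫ p, D.indicator f p ∂(μ.prod μ))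
      = ∫ x, ∫ y, D.indicator f (x, y) ∂μ ∂μ := integral_prod _ (hfi.indicator hD)
  have h1' : ∀ x ∈ Set.Ioc a b,
      (∫ y, D.indicator f (x, y) ∂μ) = ∫ y in Set.Ioc a x, f (x, y) := by
    intro x hx
    have hset : Set.Iic x ∩ Set.Ioc a b = Set.Ioc a x := by
      ext z
      simp only [Set.mem_inter_iff, Set.mem_Iic, Set.mem_Ioc]
      constructor
      · rintro ⟨h1, h2, h3⟩; exact ⟨h2, h1⟩
      · rintro ⟨h1, h2⟩; exact ⟨h2, h1, h2.trans hx.2⟩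
    have : (fun y => D.indicator f (x, y)) = (Set.Iic x).indicator (fun y => f (x, y)) := by
      funext y
      by_cases h : y ≤ x <;> simp [Set.indicator, hDdef, h]
    rw [this, integral_indicator measurableSet_Iic, hμ,
      Measure.restrict_restrict measurableSet_Iic, hset]
  -- second piece
  have h2 : (∫ p, Dᶜ.indicator f p ∂(μ.prod μ))
      = ∫ y, ∫ x, Dᶜ.indicator f (x, y) ∂μ ∂μ := integral_prod_symm _ (hfi.indicator hD.compl)
  have h2' : ∀ y ∈ Set.Ioc a b,
      (∫ x, Dᶜ.indicator f (x, y) ∂μ) = ∫ x in Set.Ioc a y, f (x, y) := by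
    intro y hy
    have hset : Set.Iio y ∩ Set.Ioc a b = Set.Ioo a y := by
      ext z
      simp only [Set.mem_inter_iff, Set.mem_Iio, Set.mem_Ioc, Set.mem_Ioo]
      constructor
      · rintro ⟨h1, h2, h3⟩; exact ⟨h2, h1⟩
      · rintro ⟨h1, h2⟩; exact ⟨h2, h1, h2.le.trans hy.2⟩
    have : (fun x => Dᶜ.indicator f (x, y)) = (Set.Iio y).indicator (fun x => f (x, y)) := by
      funext z
      by_cases h : z < y
      · simp [Set.indicator, hDdef, h, not_le.mpr h]
      · simp [Set.indicator, hDdef, h, not_lt.mp h]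
    rw [this, integral_indicator measurableSet_Iio, hμ,
      Measure.restrict_restrict measurableSet_Iio, hset,
      ← integral_Ioc_eq_integral_Ioo]
  -- integrability of the partial integrals
  have hg1SM : StronglyMeasurable fun x => ∫ y, D.indicator f (x, y) ∂μ :=
    (hf.indicator hD).integral_prod_right'
  have hg2SM : StronglyMeasurable fun y => ∫ x, Dᶜ.indicator f (x, y) ∂μ :=
    (hf.indicator hD.compl).integral_prod_left'
  have hbnd : ∀ (g : ℝ × ℝ → ℂ), (∀ p, ‖g p‖ ≤ 1) → ∀ z : ℝ,
      ‖∫ w, g (z, w) ∂μ‖ ≤ (μ Set.univ).toReal := by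
    intro g hg z
    simpa [Measure.real] using norm_integral_le_of_norm_le_const (μ := μ) (C := 1)
      (Filter.Eventually.of_forall fun w => hg (z, w))
  have hbnd' : ∀ (g : ℝ × ℝ → ℂ), (∀ p, ‖g p‖ ≤ 1) → ∀ z : ℝ,
      ‖∫ w, g (w, z) ∂μ‖ ≤ (μ Set.univ).toReal := by
    intro g hg z
    simpa [Measure.real] using norm_integral_le_of_norm_le_const (μ := μ) (C := 1)
      (Filter.Eventually.of_forall fun w => hg (w, z))
  have hindb : ∀ p, ‖D.indicator f p‖ ≤ 1 :=
    fun p => (norm_indicator_le_norm_self f p).trans (hb p)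
  have hindb' : ∀ p, ‖Dᶜ.indicator f p‖ ≤ 1 :=
    fun p => (norm_indicator_le_norm_self f p).trans (hb p)
  have hg1I : Integrable (fun x => ∫ y, D.indicator f (x, y) ∂μ) μ :=
    (integrable_const ((μ Set.univ).toReal)).mono' hg1SM.aestronglyMeasurable
      (Filter.Eventually.of_forall fun x => hbnd _ hindb x)
  have hg2I : Integrable (fun y => ∫ x, Dᶜ.indicator f (x, y) ∂μ) μ :=
    (integrable_const ((μ Set.univ).toReal)).mono' hg2SM.aestronglyMeasurable
      (Filter.Eventually.of_forall fun y => hbnd' _ hindb' y)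
  -- inner integrability over Ioc a x
  have hinner1 : ∀ x : ℝ, IntegrableOn (fun y => f (x, y)) (Set.Ioc a x) := by
    intro x
    haveI : IsFiniteMeasure (volume.restrict (Set.Ioc a x)) := fin_restrict measure_Ioc_lt_top
    exact integrable_norm_le_one
      ((hf.comp_measurable measurable_prodMk_left).aestronglyMeasurable) (fun y => hb _)
  have hinner2 : ∀ x : ℝ, IntegrableOn (fun y => f (y, x)) (Set.Ioc a x) := by
    intro x
    haveI : IsFiniteMeasure (volume.restrict (Set.Ioc a x)) := fin_restrict measure_Ioc_lt_top
    exact integrable_norm_le_one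
      ((hf.comp_measurable measurable_prodMk_right).aestronglyMeasurable) (fun y => hb _)
  -- assemble
  have hLHS : (∫ x in Set.Ioc a b, ∫ y in Set.Ioc a b, f (x, y)) = ∫ p, f p ∂(μ.prod μ) :=
    (integral_prod f hfi).symm
  rw [hLHS, hsplit, h1, h2, ← integral_add hg1I hg2I]
  refine setIntegral_congr_fun measurableSet_Ioc fun x hx => ?_
  rw [h1' x hx, h2' x hx, ← integral_add (hinner1 x) (hinner2 x)]

/-- The core identity: the second moment of the modulus of
`∫_{(a,b]} e^{iθ X_u} du` equals the double integral of characteristic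
functions of increments. -/
lemma core_identity {Ω : Type*} [MeasurableSpace Ω] (P : Measure Ω)
    [IsProbabilityMeasure P] (X : ℝ → Ω → ℝ)
    (hXjoint : Measurable (Function.uncurry X)) (θ a b : ℝ) :
    ((∫ ω, ‖∫ u in Set.Ioc a b, Complex.exp (Complex.I * θ * X u ω)‖ ^ 2 ∂P : ℝ) : ℂ)
      = ∫ x in Set.Ioc a b, ∫ y in Set.Ioc a x,
          (charIncr P X y x θ + charIncr P X y x (-θ)) := by
  set μ : Measure ℝ := volume.restrict (Set.Ioc a b) with hμdef
  haveI : IsFiniteMeasure μ := fin_restrict measure_Ioc_lt_top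
  have e_meas : ∀ ω : Ω, Measurable fun u : ℝ => Complex.exp (Complex.I * θ * X u ω) := by
    intro ω
    have hXω : Measurable fun u => X u ω := hXjoint.comp measurable_prodMk_right
    exact Complex.measurable_exp.comp ((Complex.measurable_ofReal.comp hXω).const_mul _)
  set F : Ω → ℂ := fun ω => ∫ u in Set.Ioc a b, Complex.exp (Complex.I * θ * X u ω)
    with hFdef
  set G : ℝ × ℝ → Ω → ℂ := fun p ω =>
    Complex.exp (Complex.I * θ * ((X p.1 ω : ℂ) - (X p.2 ω : ℂ))) with hGdef
  have hGmeas : Measurable (Function.uncurry G) := by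
    have m1 : Measurable fun q : (ℝ × ℝ) × Ω => X q.1.1 q.2 :=
      hXjoint.comp (measurable_fst.fst.prodMk measurable_snd)
    have m2 : Measurable fun q : (ℝ × ℝ) × Ω => X q.1.2 q.2 :=
      hXjoint.comp (measurable_fst.snd.prodMk measurable_snd)
    have m3 : Measurable fun q : (ℝ × ℝ) × Ω => ((X q.1.1 q.2 : ℂ)) :=
      Complex.measurable_ofReal.comp m1
    have m4 : Measurable fun q : (ℝ × ℝ) × Ω => ((X q.1.2 q.2 : ℂ)) :=
      Complex.measurable_ofReal.comp m2
    exact Complex.measurable_exp.comp ((m3.sub m4).const_mul _)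
  have hGnorm : ∀ p ω, ‖G p ω‖ = 1 := fun p ω => norm_exp_I_mul_sub θ _ _
  set φ : ℝ × ℝ → ℂ := fun p => ∫ ω, G p ω ∂P with hφdef
  have hφSM : StronglyMeasurable φ := hGmeas.stronglyMeasurable.integral_prod_right'
  have hφb : ∀ p, ‖φ p‖ ≤ 1 := by
    intro p
    simpa using norm_integral_le_of_norm_le_const (μ := P) (C := 1)
      (Filter.Eventually.of_forall fun ω => (hGnorm p ω).le)
  have hGint : ∀ ω, Integrable (fun p => G p ω) (μ.prod μ) :=
    fun ω => integrable_norm_le_one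
      ((hGmeas.comp measurable_prodMk_right).aestronglyMeasurable)
      (fun p => (hGnorm p ω).le)
  have h0 : ∀ ω, F ω * (starRingEnd ℂ) (F ω) = ((‖F ω‖ ^ 2 : ℝ) : ℂ) := by
    intro ω
    rw [Complex.mul_conj]
    norm_cast
    rw [Complex.sq_norm]
  have c1 : ((∫ ω, ‖F ω‖ ^ 2 ∂P : ℝ) : ℂ) = ∫ ω, F ω * (starRingEnd ℂ) (F ω) ∂P :=
    calc ((∫ ω, ‖F ω‖ ^ 2 ∂P : ℝ) : ℂ)
        = ∫ ω, ((‖F ω‖ ^ 2 : ℝ) : ℂ) ∂P := (integral_ofReal).symm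
      _ = ∫ ω, F ω * (starRingEnd ℂ) (F ω) ∂P :=
        integral_congr_ae (Filter.Eventually.of_forall fun ω => (h0 ω).symm)
  have c2 : ∀ ω, F ω * (starRingEnd ℂ) (F ω) = ∫ p, G p ω ∂(μ.prod μ) := by
    intro ω
    have e1 : (starRingEnd ℂ) (F ω)
        = ∫ v, (starRingEnd ℂ) (Complex.exp (Complex.I * θ * X v ω)) ∂μ :=
      (integral_conj).symm
    have e2 : F ω * ∫ v, (starRingEnd ℂ) (Complex.exp (Complex.I * θ * X v ω)) ∂μ
        = ∫ u, Complex.exp (Complex.I * θ * X u ω)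
            * ∫ v, (starRingEnd ℂ) (Complex.exp (Complex.I * θ * X v ω)) ∂μ ∂μ := by
      simpa [smul_eq_mul] using
        (integral_smul_const (fun u => Complex.exp (Complex.I * θ * X u ω))
          (∫ v, (starRingEnd ℂ) (Complex.exp (Complex.I * θ * X v ω)) ∂μ)).symm
    have e3 : ∀ u : ℝ, Complex.exp (Complex.I * θ * X u ω)
          * ∫ v, (starRingEnd ℂ) (Complex.exp (Complex.I * θ * X v ω)) ∂μ
        = ∫ v, Complex.exp (Complex.I * θ * X u ω)
            * (starRingEnd ℂ) (Complex.exp (Complex.I * θ * X v ω)) ∂μ := by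
      intro u
      simpa [smul_eq_mul] using
        (integral_smul (Complex.exp (Complex.I * θ * X u ω))
          (fun v => (starRingEnd ℂ) (Complex.exp (Complex.I * θ * X v ω)))).symm
    calc F ω * (starRingEnd ℂ) (F ω)
        = ∫ u, ∫ v, G (u, v) ω ∂μ ∂μ := by
          rw [e1, e2]
          refine integral_congr_ae (Filter.Eventually.of_forall fun u => ?_)
          exact (e3 u).trans (integral_congr_ae (Filter.Eventually.of_forall fun v =>
            exp_mul_conj θ (X u ω) (X v ω)))
      _ = ∫ p, G p ω ∂(μ.prod μ) := (integral_prod _ (hGint ω)).symm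
  have c3 : ∫ ω, (∫ p, G p ω ∂(μ.prod μ)) ∂P = ∫ p, φ p ∂(μ.prod μ) := by
    refine integral_integral_swap ?_
    refine integrable_norm_le_one ?_ (fun q => (hGnorm q.2 q.1).le)
    exact (hGmeas.comp measurable_swap).aestronglyMeasurable
  have c4 : ∫ p, φ p ∂(μ.prod μ) = ∫ x in Set.Ioc a b, ∫ y in Set.Ioc a b, φ (x, y) :=
    integral_prod φ (integrable_norm_le_one hφSM.aestronglyMeasurable hφb)
  have c5 := square_split φ hφSM hφb a b
  have c6 : (∫ x in Set.Ioc a b, ∫ y in Set.Ioc a x, (φ (x, y) + φ (y, x)))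
      = ∫ x in Set.Ioc a b, ∫ y in Set.Ioc a x,
          (charIncr P X y x θ + charIncr P X y x (-θ)) := by
    refine integral_congr_ae (Filter.Eventually.of_forall fun x => ?_)
    refine integral_congr_ae (Filter.Eventually.of_forall fun y => ?_)
    have hxy : φ (x, y) = charIncr P X y x θ := rfl
    have hyx : φ (y, x) = charIncr P X y x (-θ) := by
      refine integral_congr_ae (Filter.Eventually.of_forall fun ω => ?_)
      show Complex.exp (Complex.I * θ * ((X y ω : ℂ) - (X x ω : ℂ)))
        = Complex.exp (Complex.I * (-θ : ℝ) * ((X x ω : ℂ) - (X y ω : ℂ)))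
      congr 1
      push_cast
      ring
    show φ (x, y) + φ (y, x) = charIncr P X y x θ + charIncr P X y x (-θ)
    rw [hxy, hyx]
  calc ((∫ ω, ‖F ω‖ ^ 2 ∂P : ℝ) : ℂ)
      = ∫ ω, F ω * (starRingEnd ℂ) (F ω) ∂P := c1
    _ = ∫ ω, (∫ p, G p ω ∂(μ.prod μ)) ∂P :=
        integral_congr_ae (Filter.Eventually.of_forall c2)
    _ = ∫ p, φ p ∂(μ.prod μ) := c3
    _ = ∫ x in Set.Ioc a b, ∫ y in Set.Ioc a b, φ (x, y) := c4
    _ = ∫ x in Set.Ioc a b, ∫ y in Set.Ioc a x, (φ (x, y) + φ (y, x)) := c5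
    _ = _ := c6

end SecondMomentAux

open SecondMomentAux in
/-- convergence of the second moment of the modulus of increments of
`x_ε^θ` under (H^θ2). -/
theorem second_moment_limit
    {Ω : Type*} [MeasurableSpace Ω] (P : Measure Ω) [IsProbabilityMeasure P]
    (X : ℝ → Ω → ℝ) (hXmeas : ∀ s : ℝ, Measurable (X s))
    (hXjoint : Measurable (Function.uncurry X))
    (hIndep : HasIndepIncrements P X)
    (T : ℝ) (hT : 0 < T) (θ c : ℝ) (hc : 0 < c)
    (h2 : HypTwo P X θ T c) :
    ∀ s t : ℝ, 0 ≤ s → s < t → t ≤ T →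
      Tendsto (fun ε : ℝ =>
          ∫ ω, ‖approxProc X θ c ε t ω - approxProc X θ c ε s ω‖ ^ 2 ∂P)
        (𝓝[>] 0) (𝓝 (2 * (t - s))) := by
  intro s t hs hst ht
  have h2' := h2 s t hs hst ht
  have key : ∀ ε : ℝ, 0 < ε →
      ((∫ ω, ‖approxProc X θ c ε t ω - approxProc X θ c ε s ω‖ ^ 2 ∂P : ℝ) : ℂ)
        = (↑(ε ^ 2 * c ^ 2) : ℂ) * ∫ x in (2 * s / ε ^ 2)..(2 * t / ε ^ 2),
            ∫ y in (2 * s / ε ^ 2)..x,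
              (charIncr P X y x θ + charIncr P X y x (-θ)) := by
    intro ε hε
    have hε2 : (0 : ℝ) < ε ^ 2 := by positivity
    set a : ℝ := 2 * s / ε ^ 2 with hadef
    set b : ℝ := 2 * t / ε ^ 2 with hbdef
    have hab : a ≤ b := by
      rw [hadef, hbdef, div_le_div_iff_of_pos_right hε2]
      linarith
    have hInt : ∀ (ω : Ω) (u v : ℝ),
        IntervalIntegrable (fun r => Complex.exp (Complex.I * θ * X r ω)) volume u v := by
      intro ω u v
      rw [intervalIntegrable_iff]
      haveI : IsFiniteMeasure (volume.restrict (Set.uIoc u v)) :=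
        fin_restrict (by rw [Set.uIoc]; exact measure_Ioc_lt_top)
      have hXω : Measurable fun r => X r ω := hXjoint.comp measurable_prodMk_right
      refine integrable_norm_le_one ?_ (fun r => (norm_exp_I_mul θ (X r ω)).le)
      exact (Complex.measurable_exp.comp
        ((Complex.measurable_ofReal.comp hXω).const_mul _)).aestronglyMeasurable
    have stepA : ∀ ω, ‖approxProc X θ c ε t ω - approxProc X θ c ε s ω‖ ^ 2
        = (ε * c) ^ 2 * ‖∫ u in Set.Ioc a b, Complex.exp (Complex.I * θ * X u ω)‖ ^ 2 := by
      intro ω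
      have hd : approxProc X θ c ε t ω - approxProc X θ c ε s ω
          = (↑(ε * c) : ℂ) * ∫ u in Set.Ioc a b, Complex.exp (Complex.I * θ * X u ω) := by
        rw [approxProc, approxProc, ← mul_sub]
        congr 1
        rw [intervalIntegral.integral_interval_sub_left (hInt ω 0 b) (hInt ω 0 a),
          intervalIntegral.integral_of_le hab]
      rw [hd, norm_mul, mul_pow, Complex.norm_real, Real.norm_eq_abs, _root_.sq_abs]
    have hL : ∫ ω, ‖approxProc X θ c ε t ω - approxProc X θ c ε s ω‖ ^ 2 ∂P
        = (ε * c) ^ 2 * ∫ ω, ‖∫ u in Set.Ioc a b,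
            Complex.exp (Complex.I * θ * X u ω)‖ ^ 2 ∂P := by
      rw [← integral_const_mul]
      exact integral_congr_ae (Filter.Eventually.of_forall stepA)
    have hIv : (∫ x in a..b, ∫ y in a..x, (charIncr P X y x θ + charIncr P X y x (-θ)))
        = ∫ x in Set.Ioc a b, ∫ y in Set.Ioc a x,
            (charIncr P X y x θ + charIncr P X y x (-θ)) := by
      rw [intervalIntegral.integral_of_le hab]
      exact setIntegral_congr_fun measurableSet_Ioc fun x hx =>
        intervalIntegral.integral_of_le hx.1.le
    rw [hL, hIv]
    push_cast
    rw [← core_identity P X hXjoint θ a b]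
    push_cast
    ring
  have hre : Tendsto (fun ε : ℝ =>
      ((↑(ε ^ 2 * c ^ 2) : ℂ) * ∫ x in (2 * s / ε ^ 2)..(2 * t / ε ^ 2),
          ∫ y in (2 * s / ε ^ 2)..x,
            (charIncr P X y x θ + charIncr P X y x (-θ))).re)
      (𝓝[>] 0) (𝓝 (2 * (t - s))) := by
    have := (Complex.continuous_re.tendsto _).comp h2'
    simpa only [Function.comp_def, Complex.ofReal_re] using this
  refine Tendsto.congr' ?_ hre
  filter_upwards [self_mem_nhdsWithin] with ε hε
  rw [← key ε hε, Complex.ofReal_re]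

end
end

section
/- Let a > 0 and b ∈ ℝ, and set c² = (a² + b²)/(2a). Then for all 0 ≤ s < t, lim_{ε→0} ε² c² ∫_{2s/ε²}^{2t/ε²} ∫_{2s/ε²}^{x} (e^{−(x−y)(a+bi)} + e^{−(x−y)(a−bi)}) dy dx = 2(t−s). -/
open MeasureTheory Filter Topology Complex intervalIntegral

lemma inner_int (w : ℂ) (hw : w ≠ 0) (L x : ℝ) :
    (∫ y in L..x, Complex.exp (-(↑x - ↑y) * w)) =
      (1 - Complex.exp (-(↑x - ↑L) * w)) / w := by
  have h : ∀ y : ℝ, Complex.exp (-((x:ℂ) - ↑y) * w) = Complex.exp ((-w) * ↑(x - y)) := by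
    intro y; push_cast; ring_nf
  simp only [h]
  rw [intervalIntegral.integral_comp_sub_left (fun u : ℝ => Complex.exp ((-w) * ↑u)) x]
  rw [integral_exp_mul_complex (neg_ne_zero.mpr hw)]
  rw [sub_self]
  push_cast
  rw [mul_zero, Complex.exp_zero]
  rw [div_neg, neg_eq_iff_eq_neg, ← neg_div, neg_sub]

lemma outer_int (w : ℂ) (hw : w ≠ 0) (L U : ℝ) :
    (∫ x in L..U, (1 - Complex.exp (-((x:ℂ) - ↑L) * w)) / w) =
      (↑(U - L)) / w - (1 - Complex.exp (-((U:ℂ) - ↑L) * w)) / w ^ 2 := by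
  have h : ∀ x : ℝ, (1 - Complex.exp (-((x:ℂ) - ↑L) * w)) / w
      = 1/w - Complex.exp ((-w) * ↑(x - L)) / w := by
    intro x; push_cast; ring_nf
  simp only [h]
  have hi1 : IntervalIntegrable (fun _ : ℝ => (1:ℂ)/w) volume L U :=
    intervalIntegrable_const
  have hi2 : IntervalIntegrable (fun x : ℝ => Complex.exp ((-w) * ↑(x - L)) / w) volume L U := by
    apply Continuous.intervalIntegrable
    continuity
  rw [intervalIntegral.integral_sub hi1 hi2]
  have : (∫ x in L..U, Complex.exp ((-w) * ↑(x - L)) / w)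
      = (∫ x in L..U, Complex.exp ((-w) * ↑(x - L))) / w := by
    rw [intervalIntegral.integral_div]
  rw [this]
  rw [intervalIntegral.integral_comp_sub_right (fun u : ℝ => Complex.exp ((-w) * ↑u)) L]
  rw [integral_exp_mul_complex (neg_ne_zero.mpr hw), sub_self]
  simp only [intervalIntegral.integral_const, Complex.ofReal_zero, mul_zero, Complex.exp_zero]
  rw [Complex.real_smul]
  push_cast
  field_simp
  ring_nf

lemma norm_one_sub_exp_le (w : ℂ) (hwre : 0 ≤ w.re) (D : ℝ) (hD : 0 ≤ D) :
    ‖1 - Complex.exp (-(D:ℂ) * w)‖ ≤ 2 := by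
  have h1 : ‖Complex.exp (-(D:ℂ) * w)‖ ≤ 1 := by
    rw [Complex.norm_exp, Real.exp_le_one_iff]
    have : ((-(D:ℂ)) * w).re = (-D) * w.re := by
      simp [Complex.mul_re]
    rw [this]
    exact mul_nonpos_of_nonpos_of_nonneg (by linarith) hwre
  calc ‖1 - Complex.exp (-(D:ℂ) * w)‖ ≤ ‖(1:ℂ)‖ + ‖Complex.exp (-(D:ℂ) * w)‖ :=
        norm_sub_le _ _
    _ ≤ 1 + 1 := by rw [norm_one]; linarith
    _ = 2 := by norm_num

/-- verification of (H^θ2) for a Lévy process. -/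
theorem exp_double_integral_limit (a b : ℝ) (ha : 0 < a) (c : ℝ)
    (hc : c ^ 2 = (a ^ 2 + b ^ 2) / (2 * a)) :
    ∀ s t : ℝ, 0 ≤ s → s < t →
      Tendsto (fun ε : ℝ =>
          (↑(ε ^ 2 * c ^ 2) : ℂ) * ∫ x in (2 * s / ε ^ 2)..(2 * t / ε ^ 2),
            ∫ y in (2 * s / ε ^ 2)..x,
              (Complex.exp (-(↑x - ↑y) * (↑a + ↑b * Complex.I)) +
                Complex.exp (-(↑x - ↑y) * (↑a - ↑b * Complex.I))))
        (𝓝[>] 0) (𝓝 ((2 * (t - s) : ℝ) : ℂ)) := by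
  intro s t hs hst
  set w : ℂ := ↑a + ↑b * Complex.I with hwdef
  set v : ℂ := ↑a - ↑b * Complex.I with hvdef
  have hw : w ≠ 0 := by
    intro h
    have := congrArg Complex.re h
    simp [hwdef] at this
    exact ha.ne' this
  have hv : v ≠ 0 := by
    intro h
    have := congrArg Complex.re h
    simp [hvdef] at this
    exact ha.ne' this
  have hwre : 0 ≤ w.re := by simp [hwdef]; positivity
  have hvre : 0 ≤ v.re := by simp [hvdef]; positivity
  have ha0 : (a:ℂ) ≠ 0 := Complex.ofReal_ne_zero.mpr ha.ne'
  have hkey : (↑(c^2) : ℂ) * (1/w + 1/v) = 1 := by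
    rw [hc, hwdef, hvdef]
    have hab : (a:ℂ)^2 + (b:ℂ)^2 ≠ 0 := by
      have : ((a^2 + b^2 : ℝ) : ℂ) ≠ 0 := by
        apply Complex.ofReal_ne_zero.mpr
        positivity
      push_cast at this
      exact this
    push_cast
    field_simp
    ring_nf
    have hw' : (a:ℂ) + b*I ≠ 0 := hw
    have hv' : (a:ℂ) - b*I ≠ 0 := hv
    field_simp
    ring_nf
    simp only [Complex.I_sq]
    ring
  -- remainder
  set r : ℝ → ℂ := fun ε =>
    (↑(ε^2*c^2) : ℂ) * (-((1 - Complex.exp (-((2*(t-s)/ε^2 : ℝ):ℂ) * w))/w^2)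
      - (1 - Complex.exp (-((2*(t-s)/ε^2 : ℝ):ℂ) * v))/v^2) with hrdef
  have hc2 : (0:ℝ) ≤ c^2 := sq_nonneg c
  have hrt : Tendsto r (𝓝[>] (0:ℝ)) (𝓝 0) := by
    apply squeeze_zero_norm' (a := fun ε : ℝ => ε^2 * (c^2 * (2/‖w‖^2 + 2/‖v‖^2)))
    · filter_upwards [self_mem_nhdsWithin] with ε (hε : ε ∈ Set.Ioi (0:ℝ))
      have hε' : (0:ℝ) < ε := hε
      have hε2 : (0:ℝ) < ε^2 := by positivity
      have hD : (0:ℝ) ≤ 2*(t-s)/ε^2 := by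
        apply div_nonneg _ hε2.le; linarith
      have hbw : ‖(1 - Complex.exp (-((2*(t-s)/ε^2 : ℝ):ℂ) * w))/w^2‖ ≤ 2/‖w‖^2 := by
        rw [norm_div, norm_pow]
        exact div_le_div_of_nonneg_right (norm_one_sub_exp_le w hwre _ hD)
          (pow_pos (norm_pos_iff.mpr hw) 2).le
      have hbv : ‖(1 - Complex.exp (-((2*(t-s)/ε^2 : ℝ):ℂ) * v))/v^2‖ ≤ 2/‖v‖^2 := by
        rw [norm_div, norm_pow]
        exact div_le_div_of_nonneg_right (norm_one_sub_exp_le v hvre _ hD)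
          (pow_pos (norm_pos_iff.mpr hv) 2).le
      rw [hrdef]
      simp only []
      rw [norm_mul]
      have h0 : ‖(↑(ε^2*c^2):ℂ)‖ = ε^2*c^2 := by
        rw [Complex.norm_real, Real.norm_eq_abs]; exact abs_of_nonneg (by positivity)
      rw [h0]
      calc ε^2*c^2 * ‖-((1 - Complex.exp (-((2*(t-s)/ε^2 : ℝ):ℂ) * w))/w^2)
            - (1 - Complex.exp (-((2*(t-s)/ε^2 : ℝ):ℂ) * v))/v^2‖
          ≤ ε^2*c^2 * (‖(1 - Complex.exp (-((2*(t-s)/ε^2 : ℝ):ℂ) * w))/w^2‖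
            + ‖(1 - Complex.exp (-((2*(t-s)/ε^2 : ℝ):ℂ) * v))/v^2‖) := by
            gcongr
            exact (norm_sub_le _ _).trans (by rw [norm_neg])
        _ ≤ ε^2*c^2 * (2/‖w‖^2 + 2/‖v‖^2) := by
            gcongr
        _ = ε^2 * (c^2 * (2/‖w‖^2 + 2/‖v‖^2)) := by ring
    · have h1 : Tendsto (fun ε : ℝ => ε^2 * (c^2 * (2/‖w‖^2 + 2/‖v‖^2))) (𝓝 0)
          (𝓝 (0^2 * (c^2 * (2/‖w‖^2 + 2/‖v‖^2)))) :=
        ((continuous_pow 2).mul continuous_const).tendsto 0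
      simp only [ne_eq, OfNat.ofNat_ne_zero, not_false_eq_true, zero_pow, zero_mul] at h1
      exact h1.mono_left nhdsWithin_le_nhds
  have hG : Tendsto (fun ε : ℝ => ((2*(t-s):ℝ):ℂ) + r ε) (𝓝[>] (0:ℝ))
      (𝓝 ((2*(t-s):ℝ):ℂ)) := by
    have := tendsto_const_nhds (x := ((2*(t-s):ℝ):ℂ)) (f := 𝓝[>] (0:ℝ)) |>.add hrt
    simpa using this
  apply hG.congr'
  filter_upwards [self_mem_nhdsWithin] with ε (hε : ε ∈ Set.Ioi (0:ℝ))
  have hε' : (0:ℝ) < ε := hε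
  have hε2 : (0:ℝ) < ε^2 := by positivity
  set L : ℝ := 2*s/ε^2 with hLdef
  set U : ℝ := 2*t/ε^2 with hUdef
  have hUL : U - L = 2*(t-s)/ε^2 := by
    rw [hUdef, hLdef]; field_simp
  have hinner : ∀ x : ℝ, (∫ y in L..x,
      (Complex.exp (-(↑x - ↑y) * w) + Complex.exp (-(↑x - ↑y) * v)))
      = (1 - Complex.exp (-((x:ℂ) - ↑L) * w)) / w
        + (1 - Complex.exp (-((x:ℂ) - ↑L) * v)) / v := by
    intro x
    have c1 : Continuous fun y : ℝ => Complex.exp (-((x:ℂ) - ↑y) * w) :=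
      Complex.continuous_exp.comp (by fun_prop)
    have c2 : Continuous fun y : ℝ => Complex.exp (-((x:ℂ) - ↑y) * v) :=
      Complex.continuous_exp.comp (by fun_prop)
    rw [intervalIntegral.integral_add
      (c1.intervalIntegrable _ _) (c2.intervalIntegrable _ _),
      inner_int w hw, inner_int v hv]
  simp only [hinner]
  have d1 : Continuous fun x : ℝ => (1 - Complex.exp (-((x:ℂ) - ↑L) * w)) / w :=
    (continuous_const.sub (Complex.continuous_exp.comp (by fun_prop))).div_const w
  have d2 : Continuous fun x : ℝ => (1 - Complex.exp (-((x:ℂ) - ↑L) * v)) / v :=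
    (continuous_const.sub (Complex.continuous_exp.comp (by fun_prop))).div_const v
  rw [intervalIntegral.integral_add
      (d1.intervalIntegrable _ _) (d2.intervalIntegrable _ _),
    outer_int w hw, outer_int v hv]
  have hULc : ((U:ℂ) - ↑L) = ((2*(t-s)/ε^2 : ℝ) : ℂ) := by
    rw [← Complex.ofReal_sub, hUL]
  have h1 : ε^2*c^2*(U-L) = 2*(t-s)*c^2 := by
    rw [hUL]; field_simp
  have hmain : (↑(ε^2*c^2):ℂ) * (↑(U-L)/w + ↑(U-L)/v) = ((2*(t-s):ℝ):ℂ) := by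
    have h2 : ((ε^2*c^2*(U-L) : ℝ) : ℂ) = ((2*(t-s)*c^2 : ℝ):ℂ) := by
      rw [h1]
    calc (↑(ε^2*c^2):ℂ) * (↑(U-L)/w + ↑(U-L)/v)
        = ((ε^2*c^2*(U-L):ℝ):ℂ) * (1/w + 1/v) := by push_cast; ring
      _ = ((2*(t-s)*c^2:ℝ):ℂ) * (1/w + 1/v) := by rw [h2]
      _ = ((2*(t-s):ℝ):ℂ) * ((↑(c^2):ℂ) * (1/w + 1/v)) := by push_cast; ring
      _ = ((2*(t-s):ℝ):ℂ) := by rw [hkey]; ring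
  simp only [hrdef, hULc]
  linear_combination -hmain
end
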